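/- Let 𝔻 be a relative entropy. Then for all n ∈ ℕ and all p, q, t ∈ P(n): 𝔻(p‖q) ≤ 𝔻(p‖t) + D_max(t‖q), where D_max(t‖q) = log max_{i∈[n]} t_i/q_i (with the conventions 0/0 = 0 and x/0 = +∞ for x > 0). -/

import Mathlib

open scoped BigOperators ENNReal

/-- A probability vector: nonnegative entries summing to 1. -/
def IsProbVec {n : ℕ} (p : Fin n → ℝ) : Prop :=
  (∀ i, 0 ≤ p i) ∧ ∑ i, p i = 1

/-- The uniform probability vector on `n` outcomes. -/
noncomputable def uniform (n : ℕ) : Fin n → ℝ := fun _ => (n : ℝ)⁻¹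

/-- Kronecker (tensor) product of two vectors. -/
noncomputable def kron {n m : ℕ} (p : Fin n → ℝ) (q : Fin m → ℝ) : Fin (n * m) → ℝ :=
  fun i => p (finProdFinEquiv.symm i).1 * q (finProdFinEquiv.symm i).2

/-- Sum of the `k` largest entries (for vectors with nonnegative entries):
the supremum of sums over subsets of at most `k` indices. -/
noncomputable def maxPartialSum {n : ℕ} (p : Fin n → ℝ) (k : ℕ) : ℝ :=
  sSup { x | ∃ s : Finset (Fin n), s.card ≤ k ∧ ∑ i ∈ s, p i = x }

/-- `p` majorises `q`: every partial sum of the `k` largest entries of `p`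
dominates that of `q` (entries beyond a vector's length count as 0). -/
def Majorizes {n m : ℕ} (p : Fin n → ℝ) (q : Fin m → ℝ) : Prop :=
  ∀ k : ℕ, maxPartialSum q k ≤ maxPartialSum p k

/-- A channel: an `n × m` row-stochastic matrix. -/
def IsStochastic {n m : ℕ} (W : Matrix (Fin n) (Fin m) ℝ) : Prop :=
  (∀ i j, 0 ≤ W i j) ∧ ∀ i, ∑ j, W i j = 1

/-- Relative majorisation of pairs: some channel maps `(p, q)` to `(p', q')`. -/
def RelMaj {n m : ℕ} (p q : Fin n → ℝ) (p' q' : Fin m → ℝ) : Prop :=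
  ∃ W : Matrix (Fin n) (Fin m) ℝ, IsStochastic W ∧
    Matrix.vecMul p W = p' ∧ Matrix.vecMul q W = q'

/-- An entropy: a `[0,∞)`-valued function on probability vectors of all finite dimensions
that is monotone under mixing (majorisation), additive for Kronecker products,
and normalised so that `H(u₂) = log 2` (binary logarithm). -/
structure IsEntropy (H : (n : ℕ) → (Fin n → ℝ) → ℝ) : Prop where
  nonneg : ∀ {n : ℕ} (p : Fin n → ℝ), IsProbVec p → 0 ≤ H n p
  mono : ∀ {n m : ℕ} (p : Fin n → ℝ) (p' : Fin m → ℝ),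
    IsProbVec p → IsProbVec p' → Majorizes p p' → H n p ≤ H m p'
  additive : ∀ {n m : ℕ} (p : Fin n → ℝ) (q : Fin m → ℝ),
    IsProbVec p → IsProbVec q → H (n * m) (kron p q) = H n p + H m q
  normalized : H 2 (uniform 2) = Real.logb 2 2

/-- A monotone divergence: a `[0,∞]`-valued function on pairs of probability vectors of
equal finite dimension satisfying the data-processing inequality and `𝔻(1‖1) = 0`. -/
structure IsMonotoneDivergence (D : (n : ℕ) → (Fin n → ℝ) → (Fin n → ℝ) → ℝ≥0∞) : Prop where
  dpi : ∀ {n m : ℕ} (p q : Fin n → ℝ) (p' q' : Fin m → ℝ),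
    IsProbVec p → IsProbVec q → IsProbVec p' → IsProbVec q' →
    RelMaj p q p' q' → D m p' q' ≤ D n p q
  normalized : D 1 (fun _ => 1) (fun _ => 1) = 0

/-- A relative entropy: data-processing inequality, additivity for Kronecker products,
and the normalisation `𝔻(e₁‖u₂) = log 2` (binary logarithm). -/
structure IsRelativeEntropy (D : (n : ℕ) → (Fin n → ℝ) → (Fin n → ℝ) → ℝ≥0∞) : Prop where
  dpi : ∀ {n m : ℕ} (p q : Fin n → ℝ) (p' q' : Fin m → ℝ),
    IsProbVec p → IsProbVec q → IsProbVec p' → IsProbVec q' →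
    RelMaj p q p' q' → D m p' q' ≤ D n p q
  additive : ∀ {n m : ℕ} (p₁ q₁ : Fin n → ℝ) (p₂ q₂ : Fin m → ℝ),
    IsProbVec p₁ → IsProbVec q₁ → IsProbVec p₂ → IsProbVec q₂ →
    D (n * m) (kron p₁ p₂) (kron q₁ q₂) = D n p₁ q₁ + D m p₂ q₂
  normalized : D 2 ![1, 0] ![1/2, 1/2] = ENNReal.ofReal (Real.logb 2 2)

/-- The max-relative entropy `D_max(t‖q) = log max_i t_i/q_i`
(binary logarithm, with the conventions `0/0 = 0` and `x/0 = ∞` for `x > 0`). -/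
noncomputable def DmaxR {n : ℕ} (t q : Fin n → ℝ) : ℝ≥0∞ :=
  if (⨆ i, ENNReal.ofReal (t i) / ENNReal.ofReal (q i)) = ⊤ then ⊤
  else ENNReal.ofReal
    (Real.logb 2 (⨆ i, ENNReal.ofReal (t i) / ENNReal.ofReal (q i)).toReal)


section Aux

open Finset

lemma sum_kron {n m : ℕ} (p : Fin n → ℝ) (q : Fin m → ℝ) :
    ∑ i, kron p q i = (∑ i, p i) * (∑ j, q j) := by
  rw [← Equiv.sum_comp (finProdFinEquiv : Fin n × Fin m ≃ Fin (n*m)) (kron p q)]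
  simp only [kron, Equiv.symm_apply_apply, Fintype.sum_prod_type]
  rw [Finset.sum_mul_sum]

lemma isProbVec_kron {n m : ℕ} {p : Fin n → ℝ} {q : Fin m → ℝ}
    (hp : IsProbVec p) (hq : IsProbVec q) : IsProbVec (kron p q) := by
  refine ⟨fun i => mul_nonneg (hp.1 _) (hq.1 _), ?_⟩
  rw [sum_kron, hp.2, hq.2, one_mul]

lemma isProbVec_e2 : IsProbVec (![1, 0] : Fin 2 → ℝ) := by
  constructor
  · intro i; fin_cases i <;> norm_num
  · simp [Fin.sum_univ_two]

lemma isProbVec_bv {ν : ℝ} (h0 : 0 ≤ ν) (h1 : ν ≤ 1) :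
    IsProbVec (![ν, 1 - ν] : Fin 2 → ℝ) := by
  constructor
  · intro i; fin_cases i <;> simp <;> linarith
  · simp [Fin.sum_univ_two]

lemma vecMul_apply {n m : ℕ} (v : Fin n → ℝ) (W : Matrix (Fin n) (Fin m) ℝ) (j : Fin m) :
    Matrix.vecMul v W j = ∑ r, v r * W r j := by
  simp [Matrix.vecMul, dotProduct]

lemma vecMul_kron_apply {n m k : ℕ} (p : Fin n → ℝ) (q : Fin m → ℝ)
    (W : Matrix (Fin (n * m)) (Fin k) ℝ) (j : Fin k) :
    Matrix.vecMul (kron p q) W j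
      = ∑ a : Fin n, ∑ b : Fin m, p a * q b * W (finProdFinEquiv (a, b)) j := by
  rw [vecMul_apply, ← Equiv.sum_comp (finProdFinEquiv : Fin n × Fin m ≃ Fin (n*m))
    (fun r => kron p q r * W r j)]
  simp only [kron, Equiv.symm_apply_apply, Fintype.sum_prod_type]

end Aux


section Aux2

lemma sum_kron_mul {n m : ℕ} (p p' : Fin n → ℝ) (q q' : Fin m → ℝ) :
    ∑ r, kron p q r * kron p' q' r = (∑ a, p a * p' a) * (∑ b, q b * q' b) := by
  have h : ∀ r, kron p q r * kron p' q' r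
      = kron (fun a => p a * p' a) (fun b => q b * q' b) r := by
    intro r; simp only [kron]; ring
  simp_rw [h]; exact sum_kron _ _

lemma kron_key {ν₁ ν₂ : ℝ} (h10 : 0 ≤ ν₁) (h11 : ν₁ ≤ 1) (h20 : 0 ≤ ν₂) (h21 : ν₂ ≤ 1)
    (r : Fin (2 * 2)) :
    ν₁ * ν₂ * (kron ![1,0] ![1,0] r) ≤ kron ![ν₁, 1-ν₁] ![ν₂, 1-ν₂] r := by
  simp only [kron]
  generalize (finProdFinEquiv.symm r) = x
  obtain ⟨a, b⟩ := x
  fin_cases a <;> fin_cases b <;> simp <;> nlinarith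

lemma fmul (D : (n : ℕ) → (Fin n → ℝ) → (Fin n → ℝ) → ℝ≥0∞) (hD : IsRelativeEntropy D)
    {ν₁ ν₂ : ℝ} (h10 : 0 ≤ ν₁) (h11 : ν₁ ≤ 1) (h20 : 0 ≤ ν₂) (h21 : ν₂ ≤ 1)
    (hlt : ν₁ * ν₂ < 1) :
    D 2 ![1,0] ![ν₁ * ν₂, 1 - ν₁ * ν₂]
      = D 2 ![1,0] ![ν₁, 1-ν₁] + D 2 ![1,0] ![ν₂, 1-ν₂] := by
  have hνν : 0 ≤ ν₁ * ν₂ := mul_nonneg h10 h20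
  set kE : Fin (2*2) → ℝ := kron ![1,0] ![1,0] with hkE
  set kQ : Fin (2*2) → ℝ := kron ![ν₁, 1-ν₁] ![ν₂, 1-ν₂] with hkQ
  have hpE : IsProbVec kE := isProbVec_kron isProbVec_e2 isProbVec_e2
  have hpQ : IsProbVec kQ := isProbVec_kron (isProbVec_bv h10 h11) (isProbVec_bv h20 h21)
  have hpe : IsProbVec (![1,0] : Fin 2 → ℝ) := isProbVec_e2
  have hpb : IsProbVec (![ν₁ * ν₂, 1 - ν₁ * ν₂] : Fin 2 → ℝ) := isProbVec_bv hνν hlt.le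
  have hsub : (1 : ℝ) - ν₁ * ν₂ ≠ 0 := by linarith
  -- sums we will need
  have hE2 : ∑ a : Fin 2, (![(1:ℝ),0]) a * (![(1:ℝ),0]) a = 1 := by
    simp [Fin.sum_univ_two]
  have hB1 : ∑ a : Fin 2, (![ν₁, 1-ν₁]) a * (![(1:ℝ),0]) a = ν₁ := by
    simp [Fin.sum_univ_two]
  have hB2 : ∑ a : Fin 2, (![ν₂, 1-ν₂]) a * (![(1:ℝ),0]) a = ν₂ := by
    simp [Fin.sum_univ_two]
  have hEE : ∑ r, kE r * kE r = 1 := by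
    rw [hkE, sum_kron_mul, hE2]; norm_num
  have hQE : ∑ r, kQ r * kE r = ν₁ * ν₂ := by
    rw [hkQ, hkE, sum_kron_mul, hB1, hB2]
  have hadd : D (2*2) kE kQ = D 2 ![ν₁, 1-ν₁] ![ν₂, 1-ν₂] → True := fun _ => trivial
  clear hadd
  have hAdd : D (2*2) kE kQ = D 2 ![1,0] ![ν₁, 1-ν₁] + D 2 ![1,0] ![ν₂, 1-ν₂] :=
    hD.additive _ _ _ _ isProbVec_e2 (isProbVec_bv h10 h11) isProbVec_e2 (isProbVec_bv h20 h21)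
  apply le_antisymm
  · -- D 2 (νν) ≤ D 4 = RHS : channel 4 → 2
    rw [← hAdd]
    apply hD.dpi _ _ _ _ hpE hpQ hpe hpb
    refine ⟨Matrix.of (fun r => ![kE r, 1 - kE r]), ⟨?_, ?_⟩, ?_, ?_⟩
    · intro r j
      have h0 := hpE.1 r
      have h1 : kE r ≤ 1 := by
        calc kE r ≤ ∑ r', kE r' := Finset.single_le_sum (fun i _ => hpE.1 i) (Finset.mem_univ r)
        _ = 1 := hpE.2
      fin_cases j <;> simp [Matrix.of_apply] <;> linarith
    · intro r; simp [Fin.sum_univ_two]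
    · funext j
      rw [vecMul_apply]
      fin_cases j <;> simp only [Fin.zero_eta, Fin.mk_one]
      · simpa [Fin.mk_zero, Fin.mk_one, Matrix.of_apply] using hEE
      · simp only [Matrix.of_apply, Matrix.cons_val_one, Matrix.head_cons, Matrix.cons_val_zero, mul_sub, mul_one]
        rw [Finset.sum_sub_distrib, hpE.2, hEE]
        norm_num
    · funext j
      rw [vecMul_apply]
      fin_cases j <;> simp only [Fin.zero_eta, Fin.mk_one]
      · simpa [Fin.mk_zero, Fin.mk_one, Matrix.of_apply] using hQE
      · simp only [Matrix.of_apply, Matrix.cons_val_one, Matrix.head_cons, Matrix.cons_val_zero, mul_sub, mul_one]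
        rw [Finset.sum_sub_distrib, hpQ.2, hQE]
  · -- D 4 ≤ D 2 (νν) : channel 2 → 4
    rw [← hAdd]
    apply hD.dpi _ _ _ _ hpe hpb hpE hpQ
    refine ⟨Matrix.of ![kE, fun r => (kQ r - ν₁ * ν₂ * kE r) / (1 - ν₁ * ν₂)], ⟨?_, ?_⟩, ?_, ?_⟩
    · intro i r
      fin_cases i <;> simp only [Fin.zero_eta, Fin.mk_one]
      · simpa [Fin.mk_zero, Fin.mk_one, Matrix.of_apply] using hpE.1 r
      · simp only [Fin.zero_eta, Fin.mk_one, Matrix.of_apply, Matrix.cons_val_one, Matrix.head_cons]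
        apply div_nonneg _ (by linarith)
        have := kron_key h10 h11 h20 h21 r
        rw [← hkE, ← hkQ] at this
        linarith
    · intro i
      fin_cases i <;> simp only [Fin.zero_eta, Fin.mk_one]
      · simpa [Fin.mk_zero, Fin.mk_one, Matrix.of_apply] using hpE.2
      · simp only [Fin.zero_eta, Fin.mk_one, Matrix.of_apply, Matrix.cons_val_one, Matrix.head_cons, Matrix.cons_val_zero]
        rw [← Finset.sum_div, Finset.sum_sub_distrib, hpQ.2, ← Finset.mul_sum, hpE.2]
        field_simp
    · funext r
      rw [vecMul_apply, Fin.sum_univ_two]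
      simp [Matrix.of_apply]
    · funext r
      rw [vecMul_apply, Fin.sum_univ_two]
      simp only [Matrix.of_apply, Matrix.cons_val_zero, Matrix.cons_val_one, Matrix.head_cons]
      field_simp
      ring

end Aux2


section Aux3

lemma fmono (D : (n : ℕ) → (Fin n → ℝ) → (Fin n → ℝ) → ℝ≥0∞) (hD : IsRelativeEntropy D)
    {ν ν' : ℝ} (h0 : 0 ≤ ν) (hle : ν ≤ ν') (h1 : ν' ≤ 1) (hlt : ν < 1) :
    D 2 ![1,0] ![ν', 1-ν'] ≤ D 2 ![1,0] ![ν, 1-ν] := by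
  have hsub : (1:ℝ) - ν ≠ 0 := by linarith
  set α : ℝ := (ν' - ν) / (1 - ν) with hα
  have hα0 : 0 ≤ α := div_nonneg (by linarith) (by linarith)
  have hα1 : α ≤ 1 := by
    rw [hα, div_le_one (by linarith)]; linarith
  apply hD.dpi _ _ _ _ isProbVec_e2 (isProbVec_bv h0 (le_trans hle h1)) isProbVec_e2
    (isProbVec_bv (le_trans h0 hle) h1)
  refine ⟨Matrix.of ![![1,0], ![α, 1-α]], ⟨?_, ?_⟩, ?_, ?_⟩
  · intro i j
    fin_cases i <;> fin_cases j <;> simp [Matrix.of_apply] <;> linarith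
  · intro i
    fin_cases i <;> simp [Fin.sum_univ_two, Matrix.of_apply]
  · funext j
    rw [vecMul_apply, Fin.sum_univ_two]
    fin_cases j <;> simp [Matrix.of_apply]
  · funext j
    rw [vecMul_apply, Fin.sum_univ_two]
    fin_cases j <;> simp only [Fin.zero_eta, Fin.mk_one, Matrix.of_apply,
      Matrix.cons_val_zero, Matrix.cons_val_one, Matrix.head_cons, Matrix.cons_val', Matrix.empty_val',
      Matrix.cons_val_fin_one]
    · rw [hα]; field_simp; ring
    · rw [hα]; field_simp; ring
  
lemma fhalf (D : (n : ℕ) → (Fin n → ℝ) → (Fin n → ℝ) → ℝ≥0∞) (hD : IsRelativeEntropy D) :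
    D 2 ![1,0] ![(1/2 : ℝ), 1 - 1/2] = 1 := by
  have h : (![(1/2 : ℝ), 1 - 1/2] : Fin 2 → ℝ) = ![1/2, 1/2] := by
    funext j; fin_cases j <;> norm_num
  rw [h, hD.normalized, Real.logb_self_eq_one (by norm_num)]
  simp

lemma fhalfpow (D : (n : ℕ) → (Fin n → ℝ) → (Fin n → ℝ) → ℝ≥0∞) (hD : IsRelativeEntropy D)
    (j : ℕ) :
    D 2 ![1,0] ![((1:ℝ)/2)^(j+1), 1 - ((1:ℝ)/2)^(j+1)] = (j : ℝ≥0∞) + 1 := by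
  induction j with
  | zero => simpa [pow_one] using fhalf D hD
  | succ j ih =>
      have hp : ((1:ℝ)/2)^(j+1+1) = ((1:ℝ)/2)^(j+1) * (1/2) := by ring
      rw [hp, fmul D hD (by positivity) (by
          apply pow_le_one₀ <;> norm_num) (by norm_num) (by norm_num) ?_, ih, fhalf D hD]
      · push_cast; ring
      · rw [← hp]
        apply pow_lt_one₀ <;> norm_num

lemma fpow (D : (n : ℕ) → (Fin n → ℝ) → (Fin n → ℝ) → ℝ≥0∞) (hD : IsRelativeEntropy D)
    {ν : ℝ} (h0 : 0 ≤ ν) (h1 : ν < 1) (k : ℕ) :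
    D 2 ![1,0] ![ν^(k+1), 1 - ν^(k+1)] = ((k : ℝ≥0∞) + 1) * D 2 ![1,0] ![ν, 1-ν] := by
  induction k with
  | zero => simp [pow_one]
  | succ k ih =>
      have hp : ν^(k+1+1) = ν^(k+1) * ν := by ring
      rw [hp, fmul D hD (by positivity) (pow_le_one₀ h0 h1.le) h0 h1.le ?_, ih]
      · push_cast; ring
      · rw [← hp]
        exact pow_lt_one₀ h0 h1 (by omega)

end Aux3


section Aux4

lemma half_pow_le {ν : ℝ} (h0 : 0 < ν) (h1 : ν < 1) (k j : ℕ)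
    (hj : ((k:ℝ)+1) * Real.logb 2 ν⁻¹ ≤ (j:ℝ)+1) :
    ((1:ℝ)/2)^(j+1) ≤ ν^(k+1) := by
  have h2 : (1:ℝ) < 2 := one_lt_two
  have hv : ν = (2:ℝ) ^ (Real.logb 2 ν) := (Real.rpow_logb (by norm_num) (by norm_num) h0).symm
  have hhalf : ((1:ℝ)/2)^(j+1) = (2:ℝ) ^ (-((j:ℝ)+1)) := by
    have : -((j:ℝ)+1) = -(((j+1:ℕ)):ℝ) := by push_cast; ring
    rw [this, Real.rpow_neg (by norm_num), Real.rpow_natCast, one_div, inv_pow]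
  have hνpow : ν^(k+1) = (2:ℝ) ^ (((k:ℝ)+1) * Real.logb 2 ν) := by
    conv_lhs => rw [hv]
    rw [← Real.rpow_natCast ((2:ℝ) ^ (Real.logb 2 ν)) (k+1), ← Real.rpow_mul (by norm_num)]
    push_cast
    ring_nf
  rw [hhalf, hνpow]
  apply Real.rpow_le_rpow_of_exponent_le (by norm_num)
  rw [Real.logb_inv] at hj
  nlinarith [hj]

lemma fbound (D : (n : ℕ) → (Fin n → ℝ) → (Fin n → ℝ) → ℝ≥0∞) (hD : IsRelativeEntropy D)
    {ν : ℝ} (h0 : 0 < ν) (h1 : ν < 1) :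
    D 2 ![1,0] ![ν, 1-ν] ≤ ENNReal.ofReal (Real.logb 2 ν⁻¹) := by
  set d := D 2 ![1,0] ![ν, 1-ν] with hd
  set c := Real.logb 2 ν⁻¹ with hc
  have hcpos : 0 ≤ c := Real.logb_nonneg one_lt_two (one_le_inv_iff₀.mpr ⟨h0, h1.le⟩)
  have key : ∀ k : ℕ, ((k:ℝ≥0∞)+1) * d ≤ (⌈((k:ℝ)+1)*c⌉₊ : ℝ≥0∞) + 1 := by
    intro k
    set j := ⌈((k:ℝ)+1)*c⌉₊ with hj
    have hle : ((1:ℝ)/2)^(j+1) ≤ ν^(k+1) :=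
      half_pow_le h0 h1 k j (by
        calc ((k:ℝ)+1)*c ≤ (j:ℝ) := Nat.le_ceil _
        _ ≤ (j:ℝ)+1 := by linarith)
    calc ((k:ℝ≥0∞)+1) * d = D 2 ![1,0] ![ν^(k+1), 1 - ν^(k+1)] := (fpow D hD h0.le h1 k).symm
      _ ≤ D 2 ![1,0] ![((1:ℝ)/2)^(j+1), 1 - ((1:ℝ)/2)^(j+1)] := by
          apply fmono D hD (by positivity) hle (pow_le_one₀ h0.le h1.le)
          apply pow_lt_one₀ (by norm_num) (by norm_num) (by omega)
      _ = (j : ℝ≥0∞) + 1 := fhalfpow D hD j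
  have hne : d ≠ ⊤ := by
    intro htop
    have := key 0
    rw [htop] at this
    simp at this
  set r := d.toReal with hr
  have hkey' : ∀ k : ℕ, ((k:ℝ)+1) * r ≤ ((k:ℝ)+1)*c + 2 := by
    intro k
    have h := key k
    have h' := ENNReal.toReal_mono (by simp) h
    rw [ENNReal.toReal_mul, ENNReal.toReal_add (by simp) (by simp),
      ENNReal.toReal_add (by simp) (by simp)] at h'
    simp only [ENNReal.toReal_natCast, ENNReal.toReal_one] at h'
    have hceil : (⌈((k:ℝ)+1)*c⌉₊ : ℝ) < ((k:ℝ)+1)*c + 1 :=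
      Nat.ceil_lt_add_one (by positivity)
    calc ((k:ℝ)+1) * r ≤ (⌈((k:ℝ)+1)*c⌉₊ : ℝ) + 1 := h'
    _ ≤ ((k:ℝ)+1)*c + 2 := by linarith
  have hrc : r ≤ c := by
    by_contra hcon
    push_neg at hcon
    obtain ⟨k, hk⟩ := exists_nat_gt (2 / (r - c))
    have hk1 : 2 / (r - c) < (k:ℝ) + 1 := by linarith
    have h2 : 2 < ((k:ℝ)+1) * (r - c) := by
      rw [div_lt_iff₀ (by linarith)] at hk1
      nlinarith
    have := hkey' k
    nlinarith
  calc d = ENNReal.ofReal r := (ENNReal.ofReal_toReal hne).symm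
  _ ≤ ENNReal.ofReal c := ENNReal.ofReal_le_ofReal hrc

end Aux4

/-- triangle inequality: `𝔻(p‖q) ≤ 𝔻(p‖t) + D_max(t‖q)`. -/
theorem stmt5 (D : (n : ℕ) → (Fin n → ℝ) → (Fin n → ℝ) → ℝ≥0∞)
    (hD : IsRelativeEntropy D) (n : ℕ) (p q t : Fin n → ℝ)
    (hp : IsProbVec p) (hq : IsProbVec q) (ht : IsProbVec t) :
    D n p q ≤ D n p t + DmaxR t q := by
  by_cases hS : (⨆ i, ENNReal.ofReal (t i) / ENNReal.ofReal (q i)) = ⊤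
  · rw [DmaxR, if_pos hS, add_top]; exact le_top
  · set S := ⨆ i, ENNReal.ofReal (t i) / ENNReal.ofReal (q i) with hSdef
    have hDmax : DmaxR t q = ENNReal.ofReal (Real.logb 2 S.toReal) := by
      rw [DmaxR, if_neg hS]
    have hub : ∀ i, ENNReal.ofReal (t i) / ENNReal.ofReal (q i) ≤ S := fun i => le_iSup (fun i => ENNReal.ofReal (t i) / ENNReal.ofReal (q i)) i
    set lam := S.toReal with hlam
    have hpt : ∀ i, t i ≤ lam * q i := by
      intro i
      by_cases hqi : q i = 0
      · rcases le_or_gt (t i) 0 with h | h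
        · rw [hqi, mul_zero]; exact h
        · exfalso
          have hdiv : ENNReal.ofReal (t i) / ENNReal.ofReal (q i) = ⊤ := by
            rw [hqi, ENNReal.ofReal_zero]
            exact ENNReal.div_zero (by simp [ENNReal.ofReal_eq_zero]; linarith)
          exact hS (top_le_iff.mp (hdiv ▸ hub i))
      · have hq0 : 0 < q i := lt_of_le_of_ne (hq.1 i) (Ne.symm hqi)
        have h := hub i
        rw [ENNReal.div_le_iff_le_mul
          (Or.inl (by simp [ENNReal.ofReal_eq_zero]; linarith))
          (Or.inl ENNReal.ofReal_ne_top)] at h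
        have h' := ENNReal.toReal_mono (by
          exact ENNReal.mul_ne_top hS ENNReal.ofReal_ne_top) h
        rw [ENNReal.toReal_ofReal (ht.1 i), ENNReal.toReal_mul,
          ENNReal.toReal_ofReal (hq.1 i)] at h'
        exact h'
    have hlam1 : 1 ≤ lam := by
      have hsum : ∑ i, t i ≤ ∑ i, lam * q i := Finset.sum_le_sum (fun i _ => hpt i)
      rw [← Finset.mul_sum, hq.2, mul_one, ht.2] at hsum
      exact hsum
    rcases eq_or_lt_of_le hlam1 with heq | hlt
    · have hle' : ∀ i, t i ≤ q i := by
        intro i; have := hpt i; rw [← heq, one_mul] at this; exact this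
      have htq : t = q := by
        funext i
        by_contra hne
        have hlt' : t i < q i := lt_of_le_of_ne (hle' i) hne
        have hstrict : ∑ j, t j < ∑ j, q j :=
          Finset.sum_lt_sum (fun j _ => hle' j) ⟨i, Finset.mem_univ i, hlt'⟩
        rw [ht.2, hq.2] at hstrict
        exact lt_irrefl 1 hstrict
      rw [htq]
      exact le_self_add
    · set ν := lam⁻¹ with hν
      have hlam0 : (0:ℝ) < lam := by linarith
      have hν0 : 0 < ν := by rw [hν]; positivity
      have hν1 : ν < 1 := by
        rw [hν]
        exact inv_lt_one_of_one_lt₀ hlt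
      have hsub : (0:ℝ) < 1 - ν := by linarith
      set w : Fin n → ℝ := fun i => (q i - ν * t i) / (1 - ν) with hw
      have hνt : ∀ i, ν * t i ≤ q i := by
        intro i
        have h2 : ν * t i ≤ ν * (lam * q i) := mul_le_mul_of_nonneg_left (hpt i) hν0.le
        have h3 : ν * (lam * q i) = q i := by rw [hν]; field_simp
        linarith
      have hwnn : ∀ i, 0 ≤ w i := by
        intro i
        apply div_nonneg _ hsub.le
        linarith [hνt i]
      have hwsum : ∑ i, w i = 1 := by
        rw [hw]
        simp only
        rw [← Finset.sum_div, Finset.sum_sub_distrib, hq.2, ← Finset.mul_sum, ht.2]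
        field_simp
      set W : Matrix (Fin (n*2)) (Fin n) ℝ := Matrix.of (fun r j =>
        if (finProdFinEquiv.symm r).2 = 0 then (if (finProdFinEquiv.symm r).1 = j then 1 else 0)
        else w j) with hW
      have hWab : ∀ (a : Fin n) (b : Fin 2) (j : Fin n), W (finProdFinEquiv (a,b)) j
          = if b = 0 then (if a = j then 1 else 0) else w j := by
        intro a b j
        rw [hW]
        simp only [Matrix.of_apply, Equiv.symm_apply_apply]
      have hrel : RelMaj (kron p ![1,0]) (kron t ![ν, 1-ν]) p q := by
        refine ⟨W, ⟨?_, ?_⟩, ?_, ?_⟩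
        · intro r j
          rw [hW]
          simp only [Matrix.of_apply]
          split_ifs
          · norm_num
          · norm_num
          · exact hwnn j
        · intro r
          rw [hW]
          simp only [Matrix.of_apply]
          by_cases hb : (finProdFinEquiv.symm r).2 = 0
          · simp only [if_pos hb]
            simp
          · simp only [if_neg hb]
            exact hwsum
        · funext j
          rw [vecMul_kron_apply]
          simp_rw [hWab]
          rw [Fintype.sum_congr _ _ (fun a => Fin.sum_univ_two
            (fun b => p a * (![1,0]) b * (if b = 0 then (if a = j then 1 else 0) else w j)))]
          simp [mul_ite]
        · funext j
          rw [vecMul_kron_apply]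
          simp_rw [hWab]
          rw [Fintype.sum_congr _ _ (fun a => Fin.sum_univ_two
            (fun b => t a * (![ν,1-ν]) b * (if b = 0 then (if a = j then 1 else 0) else w j)))]
          simp only [Matrix.cons_val_zero, Matrix.cons_val_one, Matrix.head_cons,
            if_pos rfl, mul_ite, mul_one, mul_zero]
          rw [Finset.sum_add_distrib]
          simp only [if_pos trivial, if_neg (show ¬(1:Fin 2) = 0 by decide)]
          rw [Finset.sum_ite_eq' Finset.univ j (fun x => t x * ν)]
          simp only [Finset.mem_univ, if_true]
          have e2 : ∑ x : Fin n, t x * (1-ν) * w j = (1-ν) * w j := by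
            simp_rw [mul_assoc]
            rw [← Finset.sum_mul, ht.2, one_mul]
          rw [e2, hw]
          simp only
          field_simp
          ring
      have hPk : IsProbVec (kron p ![1,0]) := isProbVec_kron hp isProbVec_e2
      have hQk : IsProbVec (kron t ![ν, 1-ν]) := isProbVec_kron ht (isProbVec_bv hν0.le hν1.le)
      have h1 : D n p q ≤ D (n*2) (kron p ![1,0]) (kron t ![ν, 1-ν]) :=
        hD.dpi _ _ _ _ hPk hQk hp hq hrel
      have h2 : D (n*2) (kron p ![1,0]) (kron t ![ν, 1-ν]) = D n p t + D 2 ![1,0] ![ν, 1-ν] :=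
        hD.additive _ _ _ _ hp ht isProbVec_e2 (isProbVec_bv hν0.le hν1.le)
      have h3 := fbound D hD hν0 hν1
      have hinv : ν⁻¹ = lam := by rw [hν, inv_inv]
      rw [hDmax, ← hinv]
      exact le_trans h1 (by rw [h2]; exact add_le_add le_rfl h3)
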